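/- Let r₁, r₂, c₀ be real numbers with 0 < 2r₁ < r₂, c₀ ≥ 0 and c₀ r₂ ≤ 1/2. Then there exists M ∈ ℕ such that: (a) for every s ∈ (0, r₂) the set {n ∈ ℕ : a_n < s < b_n} is nonempty; (b) for every s > 0 the set {n ∈ ℕ : a_n < s < b_n} has at most M elements. In other words, the dyadic open intervals (a_n, b_n) cover (0, r₂) with covering multiplicity between 1 and M. -/

import Mathlib

open Set

/-- The dyadic open intervals `(r₁/2ⁿ − c₀r₁²/4ⁿ, r₂/2ⁿ + c₀r₂²/4ⁿ)` cover `(0, r₂)`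
with covering multiplicity between `1` and some finite `M`. -/
theorem dyadic_corona_covering (r₁ r₂ c₀ : ℝ)
    (h1 : 0 < 2 * r₁) (h2 : 2 * r₁ < r₂) (h3 : 0 ≤ c₀) (h4 : c₀ * r₂ ≤ 1 / 2) :
    ∃ M : ℕ,
      (∀ s ∈ Set.Ioo (0 : ℝ) r₂, ∃ n : ℕ,
        r₁ / 2 ^ n - c₀ * r₁ ^ 2 / 4 ^ n < s ∧ s < r₂ / 2 ^ n + c₀ * r₂ ^ 2 / 4 ^ n) ∧
      (∀ s : ℝ, 0 < s →
        {n : ℕ | r₁ / 2 ^ n - c₀ * r₁ ^ 2 / 4 ^ n < s ∧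
            s < r₂ / 2 ^ n + c₀ * r₂ ^ 2 / 4 ^ n}.Finite ∧
        {n : ℕ | r₁ / 2 ^ n - c₀ * r₁ ^ 2 / 4 ^ n < s ∧
            s < r₂ / 2 ^ n + c₀ * r₂ ^ 2 / 4 ^ n}.ncard ≤ M) := by
  have hr1 : 0 < r₁ := by linarith
  have hr2 : 0 < r₂ := by linarith
  have hr12 : r₁ < r₂ := by linarith
  have hc2 : c₀ * r₂ ^ 2 ≤ r₂ / 2 := by nlinarith
  have hc1 : c₀ * r₁ ^ 2 ≤ r₁ / 2 := by nlinarith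
  obtain ⟨K, hK⟩ := pow_unbounded_of_one_lt (3 * r₂ / r₁) (one_lt_two (α := ℝ))
  have hK' : 3 * r₂ < r₁ * 2 ^ K := by
    rw [div_lt_iff₀ hr1] at hK; linarith
  refine ⟨K, ?_, ?_⟩
  · -- covering
    rintro s ⟨hs0, hsr⟩
    have hex : ∃ n : ℕ, r₁ < s * 2 ^ n := by
      obtain ⟨n, hn⟩ := pow_unbounded_of_one_lt (r₁ / s) (one_lt_two (α := ℝ))
      rw [div_lt_iff₀ hs0] at hn
      exact ⟨n, by linarith⟩
    refine ⟨Nat.find hex, ?_, ?_⟩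
    · have hspec := Nat.find_spec hex
      have hp : (0:ℝ) < 2 ^ Nat.find hex := by positivity
      have hq : (0:ℝ) ≤ c₀ * r₁ ^ 2 / 4 ^ Nat.find hex := by positivity
      have : r₁ / 2 ^ Nat.find hex < s := by
        rw [div_lt_iff₀ hp]; linarith
      linarith
    · have hq : (0:ℝ) ≤ c₀ * r₂ ^ 2 / 4 ^ Nat.find hex := by positivity
      rcases Nat.eq_zero_or_pos (Nat.find hex) with h0 | hpos
      · rw [h0]; simp; nlinarith
      · obtain ⟨k, hk⟩ : ∃ k, Nat.find hex = k + 1 := ⟨Nat.find hex - 1, by omega⟩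
        have hmin := Nat.find_min hex (m := k) (by omega)
        push_neg at hmin
        have hpk : (0:ℝ) < 2 ^ k := by positivity
        have : s < r₂ / 2 ^ (k + 1) := by
          rw [lt_div_iff₀ (by positivity)]
          have : s * 2 ^ (k + 1) = 2 * (s * 2 ^ k) := by ring
          rw [this]; nlinarith
        rw [hk] at hq ⊢; linarith
  · -- multiplicity
    intro s hs
    set S := {n : ℕ | r₁ / 2 ^ n - c₀ * r₁ ^ 2 / 4 ^ n < s ∧
        s < r₂ / 2 ^ n + c₀ * r₂ ^ 2 / 4 ^ n} with hS
    have hub : ∀ n ∈ S, 2 * (s * 2 ^ n) < 3 * r₂ := by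
      intro n hn
      have h := hn.2
      have hp : (0:ℝ) < 2 ^ n := by positivity
      have h4p : (0:ℝ) < 4 ^ n := by positivity
      have hp1 : (1:ℝ) ≤ 2 ^ n := one_le_pow₀ (by norm_num)
      have he : (4:ℝ) ^ n = 2 ^ n * 2 ^ n := by
        rw [← mul_pow]; norm_num
      rw [div_add_div _ _ hp.ne' h4p.ne', lt_div_iff₀ (by positivity)] at h
      rw [he] at h
      nlinarith [mul_pos hp hp, mul_le_mul_of_nonneg_right hc2 hp.le,
        mul_nonneg (mul_nonneg hr2.le hp.le) (sub_nonneg.mpr hp1)]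
    have hlb : ∀ n ∈ S, r₁ < 2 * (s * 2 ^ n) := by
      intro n hn
      have h := hn.1
      have hp : (0:ℝ) < 2 ^ n := by positivity
      have h4p : (0:ℝ) < 4 ^ n := by positivity
      have hp1 : (1:ℝ) ≤ 2 ^ n := one_le_pow₀ (by norm_num)
      have he : (4:ℝ) ^ n = 2 ^ n * 2 ^ n := by
        rw [← mul_pow]; norm_num
      rw [div_sub_div _ _ hp.ne' h4p.ne', div_lt_iff₀ (by positivity)] at h
      rw [he] at h
      nlinarith [mul_pos hp hp, mul_le_mul_of_nonneg_right hc1 hp.le,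
        mul_nonneg (mul_nonneg hr1.le hp.le) (sub_nonneg.mpr hp1)]
    obtain ⟨N, hN⟩ := pow_unbounded_of_one_lt (3 * r₂ / (2 * s)) (one_lt_two (α := ℝ))
    have hSsub : S ⊆ Set.Iio N := by
      intro n hn
      have h := hub n hn
      rw [div_lt_iff₀ (by positivity)] at hN
      have h2n : (2:ℝ) ^ n < 2 ^ N := by nlinarith
      exact (pow_lt_pow_iff_right₀ one_lt_two).mp h2n
    have hfin : S.Finite := (Set.finite_Iio N).subset hSsub
    refine ⟨hfin, ?_⟩
    rcases S.eq_empty_or_nonempty with hemp | hne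
    · rw [hemp]; simp
    · set n₀ := sInf S with hn₀def
      have hn₀ : n₀ ∈ S := Nat.sInf_mem hne
      have hsub2 : S ⊆ Set.Ico n₀ (n₀ + K) := by
        intro n hn
        refine ⟨Nat.sInf_le hn, ?_⟩
        have ha := hub n hn
        have hb := hlb n₀ hn₀
        have h2n : (2:ℝ) ^ n < 2 ^ (n₀ + K) := by
          rw [pow_add]
          nlinarith [pow_pos (two_pos (α := ℝ)) K, pow_pos (two_pos (α := ℝ)) n₀,
            pow_pos (two_pos (α := ℝ)) n]
        exact (pow_lt_pow_iff_right₀ one_lt_two).mp h2n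
      calc S.ncard ≤ (Set.Ico n₀ (n₀ + K)).ncard :=
            Set.ncard_le_ncard hsub2 (Set.finite_Ico _ _)
        _ = K := by
            rw [← Finset.coe_Ico, Set.ncard_coe_finset, Nat.card_Ico]; omega
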